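/- Assume n ≥ 2, all rᵢ > 0, τ > 0, L·1ₙ = 0 and the kernel of L is exactly the span of 1ₙ. Suppose the algorithm synchronizes from every initial condition: for every z₀ ∈ ℝⁿ×ℝⁿ×ℝⁿ there exist real numbers r* and x* such that the trajectory z_k = A^k z₀ = (x_k, s_k, y_k) satisfies x_k − k·τ·r*·1ₙ → x*·1ₙ, s_k → r*·R⁻¹1ₙ, and y_k → 0ₙ as k → ∞. Then κ₁ ≠ κ₂, p > 0, the eigenvalue 1 of A has algebraic multiplicity exactly 2, and every other complex eigenvalue μ of A satisfies |μ| < 1. -/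

import Mathlib

open Matrix Polynomial Filter

/-- The 3n×3n transition matrix of the skewless clock-synchronization algorithm. -/
noncomputable def Amat (n : ℕ) (τ κ₁ κ₂ p : ℝ) (L R : Matrix (Fin n) (Fin n) ℝ) :
    Matrix (Fin n ⊕ Fin n ⊕ Fin n) (Fin n ⊕ Fin n ⊕ Fin n) ℝ :=
  Matrix.fromBlocks 1 (Matrix.fromCols (τ • R) 0)
    (Matrix.fromRows ((-κ₁) • L) ((-p) • L))
    (Matrix.fromBlocks 1 ((-κ₂) • (1 : Matrix (Fin n) (Fin n) ℝ)) 0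
      ((1 - p) • (1 : Matrix (Fin n) (Fin n) ℝ)))

lemma sum_elim_comp {n : ℕ} {K : Type*} (w : (Fin n ⊕ Fin n ⊕ Fin n) → K) :
    Sum.elim (fun i => w (Sum.inl i))
      (Sum.elim (fun i => w (Sum.inr (Sum.inl i))) (fun i => w (Sum.inr (Sum.inr i)))) = w := by
  funext j; rcases j with i | (i | i) <;> rfl

lemma amat_mulVec {n : ℕ} {K : Type*} [CommRing K] (τ κ₁ κ₂ p : K)
    (L R : Matrix (Fin n) (Fin n) K) (x s y : Fin n → K) :
    (Matrix.fromBlocks 1 (Matrix.fromCols (τ • R) 0)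
      (Matrix.fromRows ((-κ₁) • L) ((-p) • L))
      (Matrix.fromBlocks 1 ((-κ₂) • (1 : Matrix (Fin n) (Fin n) K)) 0
        ((1 - p) • (1 : Matrix (Fin n) (Fin n) K)))) *ᵥ Sum.elim x (Sum.elim s y)
    = Sum.elim (x + τ • (R *ᵥ s))
        (Sum.elim ((-κ₁) • (L *ᵥ x) + s + (-κ₂) • y) ((-p) • (L *ᵥ x) + (1 - p) • y)) := by
  rw [Matrix.fromBlocks_mulVec]
  simp only [Sum.elim_comp_inl, Sum.elim_comp_inr]
  rw [Matrix.fromCols_mulVec_sumElim, Matrix.fromBlocks_mulVec, Matrix.fromRows_mulVec]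
  simp only [Sum.elim_comp_inl, Sum.elim_comp_inr]
  funext j
  rcases j with i | (i | i) <;>
    simp [Matrix.neg_mulVec, Matrix.smul_mulVec, Matrix.one_mulVec, Matrix.zero_mulVec, add_assoc]

lemma mulVec_ofReal {ι : Type*} [Fintype ι] (M : Matrix ι ι ℝ) (v : ι → ℂ) (j : ι) :
    (M.map (Complex.ofReal) *ᵥ v) j
      = ((M *ᵥ fun l => (v l).re) j : ℝ) + ((M *ᵥ fun l => (v l).im) j : ℝ) * Complex.I := by
  simp only [Matrix.mulVec, dotProduct, Matrix.map_apply, Complex.ofReal_sum,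
    Complex.ofReal_mul, Finset.sum_mul, ← Finset.sum_add_distrib]
  refine Finset.sum_congr rfl fun l _ => ?_
  rw [mul_assoc, ← mul_add, Complex.re_add_im]

lemma map_matrix_pow {ι : Type*} [Fintype ι] [DecidableEq ι] (M : Matrix ι ι ℝ) (k : ℕ) :
    (M.map Complex.ofReal) ^ k = (M ^ k).map Complex.ofReal := by
  have h : ∀ N : Matrix ι ι ℝ, N.map Complex.ofReal = Complex.ofRealHom.mapMatrix N := fun _ => rfl
  rw [h, h, map_pow]



lemma amat_map {n : ℕ} (τ κ₁ κ₂ p : ℝ) (L R : Matrix (Fin n) (Fin n) ℝ)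
    (Amat : Matrix (Fin n ⊕ Fin n ⊕ Fin n) (Fin n ⊕ Fin n ⊕ Fin n) ℝ)
    (hA : Amat = Matrix.fromBlocks 1 (Matrix.fromCols (τ • R) 0)
      (Matrix.fromRows ((-κ₁) • L) ((-p) • L))
      (Matrix.fromBlocks 1 ((-κ₂) • (1 : Matrix (Fin n) (Fin n) ℝ)) 0
        ((1 - p) • (1 : Matrix (Fin n) (Fin n) ℝ)))) :
    Amat.map Complex.ofReal
      = Matrix.fromBlocks 1 (Matrix.fromCols ((τ : ℂ) • R.map Complex.ofReal) 0)
        (Matrix.fromRows ((-(κ₁ : ℂ)) • L.map Complex.ofReal)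
          ((-(p : ℂ)) • L.map Complex.ofReal))
        (Matrix.fromBlocks 1 ((-(κ₂ : ℂ)) • (1 : Matrix (Fin n) (Fin n) ℂ)) 0
          ((1 - (p : ℂ)) • (1 : Matrix (Fin n) (Fin n) ℂ))) := by
  subst hA
  ext j l
  rcases j with i | (i | i) <;> rcases l with i' | (i' | i') <;>
    simp [Matrix.map_apply, Matrix.one_apply, apply_ite] <;> (try split_ifs) <;> tauto


lemma charpoly_toLin' {ι : Type*} [Fintype ι] [DecidableEq ι] {K : Type*} [Field K]
    (M : Matrix ι ι K) : (Matrix.toLin' M).charpoly = M.charpoly := by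
  rw [← LinearMap.charpoly_toMatrix (Matrix.toLin' M) (Pi.basisFun K ι),
    LinearMap.toMatrix_eq_toMatrix', LinearMap.toMatrix'_toLin']

lemma charpoly_shift {ι : Type*} [Fintype ι] [DecidableEq ι] {K : Type*} [Field K]
    (M : Matrix ι ι K) (t : K) :
    M.charpoly.comp (X + C t) = (M - t • 1).charpoly := by
  have hc : ∀ q : K[X], q.comp (X + C t) = ((aeval (X + C t)).toRingHom : K[X] →+* K[X]) q := by
    intro q
    rw [Polynomial.comp, AlgHom.toRingHom_eq_coe, RingHom.coe_coe, aeval_def,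
      Polynomial.algebraMap_eq]
  rw [hc, Matrix.charpoly, Matrix.charpoly, RingHom.map_det]
  congr 1
  ext i j
  rw [RingHom.mapMatrix_apply]
  by_cases h : i = j
  · subst h
    simp [Matrix.charmatrix_apply_eq, Matrix.sub_apply, Matrix.smul_apply, Matrix.one_apply,
      sub_sub, map_sub, aeval_X]
    ring
  · simp [Matrix.charmatrix_apply_ne _ _ _ h, Matrix.sub_apply, Matrix.smul_apply,
      Matrix.one_apply_ne h]

lemma eval_charpoly' {ι : Type*} [Fintype ι] [DecidableEq ι] {K : Type*} [Field K]
    (M : Matrix ι ι K) (t : K) : M.charpoly.eval t = (t • 1 - M).det := by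
  rw [Matrix.charpoly, ← Polynomial.coe_evalRingHom, RingHom.map_det]
  congr 1
  ext i j
  rw [RingHom.mapMatrix_apply]
  by_cases h : i = j
  · subst h
    simp [Matrix.charmatrix_apply_eq, Matrix.sub_apply, Matrix.smul_apply, Matrix.one_apply]
  · simp [Matrix.charmatrix_apply_ne _ _ _ h, Matrix.sub_apply, Matrix.smul_apply,
      Matrix.one_apply_ne h]

lemma eigenvector_of_root {ι : Type*} [Fintype ι] [DecidableEq ι]
    (M : Matrix ι ι ℂ) (μ : ℂ) (h : M.charpoly.IsRoot μ) :
    ∃ u : ι → ℂ, u ≠ 0 ∧ M *ᵥ u = μ • u := by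
  have hdet : (μ • 1 - M).det = 0 := by rw [← eval_charpoly']; exact h
  obtain ⟨u, hu, h0⟩ := (Matrix.exists_mulVec_eq_zero_iff).mpr hdet
  refine ⟨u, hu, ?_⟩
  rw [Matrix.sub_mulVec, sub_eq_zero] at h0
  rw [← h0, Matrix.smul_mulVec, Matrix.one_mulVec]


/-- Necessity part of Theorem 1: if the algorithm synchronizes from every initial
condition, then `κ₁ ≠ κ₂`, `p > 0`, the eigenvalue `1` of `A` has algebraic
multiplicity exactly 2, and every other complex eigenvalue of `A` has modulus `< 1`. -/
theorem stmt8 (n : ℕ) (hn : 2 ≤ n) (τ κ₁ κ₂ p : ℝ)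
    (L : Matrix (Fin n) (Fin n) ℝ) (r : Fin n → ℝ)
    (R : Matrix (Fin n) (Fin n) ℝ) (hR : R = Matrix.diagonal r)
    (hr : ∀ i, 0 < r i) (hτ : 0 < τ)
    (hL1 : L *ᵥ (fun _ => (1 : ℝ)) = 0)
    (hker : ∀ v : Fin n → ℝ, L *ᵥ v = 0 → ∃ c : ℝ, v = fun _ => c)
    (hsync : ∀ x0 s0 y0 : Fin n → ℝ, ∃ rstar xstar : ℝ,
      Tendsto (fun k : ℕ => fun i : Fin n =>
          (((Amat n τ κ₁ κ₂ p L R) ^ k) *ᵥ Sum.elim x0 (Sum.elim s0 y0)) (Sum.inl i)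
            - (k : ℝ) * τ * rstar)
        atTop (nhds fun _ => xstar) ∧
      Tendsto (fun k : ℕ => fun i : Fin n =>
          (((Amat n τ κ₁ κ₂ p L R) ^ k) *ᵥ Sum.elim x0 (Sum.elim s0 y0))
            (Sum.inr (Sum.inl i)))
        atTop (nhds fun i => rstar * (r i)⁻¹) ∧
      Tendsto (fun k : ℕ => fun i : Fin n =>
          (((Amat n τ κ₁ κ₂ p L R) ^ k) *ᵥ Sum.elim x0 (Sum.elim s0 y0))
            (Sum.inr (Sum.inr i)))
        atTop (nhds fun _ => (0 : ℝ))) :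
    κ₁ ≠ κ₂ ∧ 0 < p ∧
    Polynomial.rootMultiplicity (1 : ℂ)
      ((Amat n τ κ₁ κ₂ p L R).map Complex.ofReal).charpoly = 2 ∧
    ∀ μ : ℂ, ((Amat n τ κ₁ κ₂ p L R).map Complex.ofReal).charpoly.IsRoot μ →
      μ ≠ 1 → ‖μ‖ < 1 := by
  obtain ⟨i0, i1, hi01⟩ : ∃ i0 i1 : Fin n, i0 ≠ i1 :=
    ⟨⟨0, by omega⟩, ⟨1, by omega⟩, by simp [Fin.ext_iff]⟩
  set A := Amat n τ κ₁ κ₂ p L R with hAdef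
  set Ac := A.map Complex.ofReal with hAcdef
  have hAeq : A = Matrix.fromBlocks 1 (Matrix.fromCols (τ • R) 0)
      (Matrix.fromRows ((-κ₁) • L) ((-p) • L))
      (Matrix.fromBlocks 1 ((-κ₂) • (1 : Matrix (Fin n) (Fin n) ℝ)) 0
        ((1 - p) • (1 : Matrix (Fin n) (Fin n) ℝ))) := rfl
  have hAmul : ∀ x s y : Fin n → ℝ, A *ᵥ Sum.elim x (Sum.elim s y)
      = Sum.elim (x + τ • (R *ᵥ s))
        (Sum.elim ((-κ₁) • (L *ᵥ x) + s + (-κ₂) • y) ((-p) • (L *ᵥ x) + (1 - p) • y)) := by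
    intro x s y; rw [hAeq]; exact amat_mulVec τ κ₁ κ₂ p L R x s y
  have hAc : Ac = Matrix.fromBlocks 1
      (Matrix.fromCols ((τ : ℂ) • R.map Complex.ofReal) 0)
      (Matrix.fromRows ((-(κ₁ : ℂ)) • L.map Complex.ofReal) ((-(p : ℂ)) • L.map Complex.ofReal))
      (Matrix.fromBlocks 1 ((-(κ₂ : ℂ)) • (1 : Matrix (Fin n) (Fin n) ℂ)) 0
        ((1 - (p : ℂ)) • (1 : Matrix (Fin n) (Fin n) ℂ))) :=
    amat_map τ κ₁ κ₂ p L R A hAeq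
  have hAcmul : ∀ x s y : Fin n → ℂ, Ac *ᵥ Sum.elim x (Sum.elim s y)
      = Sum.elim (x + (τ : ℂ) • (R.map Complex.ofReal *ᵥ s))
        (Sum.elim ((-(κ₁ : ℂ)) • (L.map Complex.ofReal *ᵥ x) + s + (-(κ₂ : ℂ)) • y)
          ((-(p : ℂ)) • (L.map Complex.ofReal *ᵥ x) + (1 - (p : ℂ)) • y)) := by
    intro x s y; rw [hAc]; exact amat_mulVec _ _ _ _ _ _ x s y
  -- real second differences tend to zero
  have hD : ∀ z0 : (Fin n ⊕ Fin n ⊕ Fin n) → ℝ, ∀ j,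
      Tendsto (fun k : ℕ => (A ^ (k+2) *ᵥ z0) j - 2 * (A ^ (k+1) *ᵥ z0) j + (A ^ k *ᵥ z0) j)
        atTop (nhds 0) := by
    intro z0 j
    obtain ⟨rs, xs, h1, h2, h3⟩ := hsync (fun i => z0 (Sum.inl i))
      (fun i => z0 (Sum.inr (Sum.inl i))) (fun i => z0 (Sum.inr (Sum.inr i)))
    rw [sum_elim_comp z0] at h1 h2 h3
    rcases j with i | (i | i)
    · have h := tendsto_pi_nhds.mp h1 i
      have e2 := h.comp (tendsto_add_atTop_nat 2)
      have e1 := h.comp (tendsto_add_atTop_nat 1)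
      have lim := (e2.sub (e1.const_mul 2)).add h
      rw [show (0:ℝ) = xs - 2 * xs + xs by ring]
      convert lim using 1
      funext k
      simp only [Function.comp]
      push_cast
      ring
    · have h := tendsto_pi_nhds.mp h2 i
      have lim := ((h.comp (tendsto_add_atTop_nat 2)).sub
        ((h.comp (tendsto_add_atTop_nat 1)).const_mul 2)).add h
      rw [show (0:ℝ) = rs * (r i)⁻¹ - 2 * (rs * (r i)⁻¹) + rs * (r i)⁻¹ by ring]
      exact lim
    · have h := tendsto_pi_nhds.mp h3 i
      have lim := ((h.comp (tendsto_add_atTop_nat 2)).sub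
        ((h.comp (tendsto_add_atTop_nat 1)).const_mul 2)).add h
      rw [show (0:ℝ) = 0 - 2 * 0 + 0 by ring]
      exact lim
  -- complex second differences tend to zero
  have hDc : ∀ v : (Fin n ⊕ Fin n ⊕ Fin n) → ℂ, ∀ j,
      Tendsto (fun k : ℕ => (Ac ^ (k+2) *ᵥ v) j - 2 * (Ac ^ (k+1) *ᵥ v) j + (Ac ^ k *ᵥ v) j)
        atTop (nhds 0) := by
    intro v j
    have hre := hD (fun l => (v l).re) j
    have him := hD (fun l => (v l).im) j
    have hcoord : ∀ k : ℕ, (Ac ^ k *ᵥ v) j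
        = ((A ^ k *ᵥ fun l => (v l).re) j : ℝ)
          + ((A ^ k *ᵥ fun l => (v l).im) j : ℝ) * Complex.I := by
      intro k
      rw [hAcdef, map_matrix_pow]
      exact mulVec_ofReal _ v j
    have keyf : (fun k : ℕ => (Ac ^ (k+2) *ᵥ v) j - 2 * (Ac ^ (k+1) *ᵥ v) j + (Ac ^ k *ᵥ v) j)
        = fun k : ℕ =>
          (((A ^ (k+2) *ᵥ fun l => (v l).re) j - 2 * ((A ^ (k+1) *ᵥ fun l => (v l).re) j)
            + (A ^ k *ᵥ fun l => (v l).re) j : ℝ) : ℂ)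
          + (((A ^ (k+2) *ᵥ fun l => (v l).im) j - 2 * ((A ^ (k+1) *ᵥ fun l => (v l).im) j)
            + (A ^ k *ᵥ fun l => (v l).im) j : ℝ) : ℂ) * Complex.I := by
      funext k
      rw [hcoord, hcoord, hcoord]
      push_cast
      ring
    rw [keyf]
    have lre := (Complex.continuous_ofReal.tendsto (0:ℝ)).comp hre
    have lim' := ((Complex.continuous_ofReal.tendsto (0:ℝ)).comp him).mul_const Complex.I
    have := lre.add lim'
    simpa using this
  -- vanishing generalized eigenvectors
  have hZ : ∀ (m : ℕ) (w : (Fin n ⊕ Fin n ⊕ Fin n) → ℂ), ((Ac - 1) ^ m) *ᵥ w = 0 →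
      (∀ j, Tendsto (fun k : ℕ => (Ac ^ k *ᵥ w) j) atTop (nhds 0)) → w = 0 := by
    intro m
    induction m with
    | zero => intro w h0 _; simpa using h0
    | succ m ih =>
      intro w h0 hlim
      have hNw : ((Ac - 1) ^ m) *ᵥ ((Ac - 1) *ᵥ w) = 0 := by
        rw [Matrix.mulVec_mulVec, ← pow_succ]; exact h0
      have hlimN : ∀ j, Tendsto (fun k : ℕ => (Ac ^ k *ᵥ ((Ac - 1) *ᵥ w)) j) atTop (nhds 0) := by
        intro j
        have hk : ∀ k : ℕ, (Ac ^ k *ᵥ ((Ac - 1) *ᵥ w)) j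
            = (Ac ^ (k+1) *ᵥ w) j - (Ac ^ k *ᵥ w) j := by
          intro k
          rw [Matrix.mulVec_mulVec, mul_sub, mul_one, ← pow_succ, Matrix.sub_mulVec]
          rfl
        simp only [hk]
        simpa using ((hlim j).comp (tendsto_add_atTop_nat 1)).sub (hlim j)
      have hNw0 : (Ac - 1) *ᵥ w = 0 := ih _ hNw hlimN
      have hfix : Ac *ᵥ w = w := by
        rwa [Matrix.sub_mulVec, Matrix.one_mulVec, sub_eq_zero] at hNw0
      have hfixk : ∀ k : ℕ, Ac ^ k *ᵥ w = w := by
        intro k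
        induction k with
        | zero => simp [Matrix.one_mulVec]
        | succ k ihk => rw [pow_succ, ← Matrix.mulVec_mulVec, hfix, ihk]
      funext j
      have hj := hlim j
      simp only [hfixk] at hj
      exact tendsto_nhds_unique tendsto_const_nhds hj
  -- eigenvalue modulus
  have hEig : ∀ (μ : ℂ) (u : (Fin n ⊕ Fin n ⊕ Fin n) → ℂ), u ≠ 0 → Ac *ᵥ u = μ • u →
      μ ≠ 1 → ‖μ‖ < 1 := by
    intro μ u hu hAu hμ
    have hpowu : ∀ k : ℕ, Ac ^ k *ᵥ u = μ ^ k • u := by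
      intro k
      induction k with
      | zero => simp [Matrix.one_mulVec]
      | succ k ihk =>
        rw [pow_succ, ← Matrix.mulVec_mulVec, hAu, Matrix.mulVec_smul, ihk, smul_smul,
          ← pow_succ']
    obtain ⟨j, hj⟩ : ∃ j, u j ≠ 0 := by
      by_contra hcon
      push_neg at hcon
      exact hu (funext fun j => hcon j)
    have hcd := hDc u j
    have keyf : (fun k : ℕ => (Ac ^ (k+2) *ᵥ u) j - 2 * (Ac ^ (k+1) *ᵥ u) j + (Ac ^ k *ᵥ u) j)
        = fun k : ℕ => μ ^ k * ((μ - 1) ^ 2 * u j) := by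
      funext k
      simp only [hpowu, Pi.smul_apply, smul_eq_mul]
      ring
    rw [keyf] at hcd
    have hc : (μ - 1) ^ 2 * u j ≠ 0 := mul_ne_zero (pow_ne_zero _ (sub_ne_zero.mpr hμ)) hj
    have hμ0 : Tendsto (fun k : ℕ => μ ^ k) atTop (nhds 0) := by
      have h2 := hcd.mul_const (((μ - 1) ^ 2 * u j)⁻¹)
      have heq : (fun k : ℕ => μ ^ k * ((μ - 1) ^ 2 * u j) * ((μ - 1) ^ 2 * u j)⁻¹)
          = fun k : ℕ => μ ^ k := by
        funext k
        rw [mul_assoc, mul_inv_cancel₀ hc, mul_one]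
      rw [heq] at h2
      simpa using h2
    have hnorm := hμ0.norm
    simp only [norm_pow, norm_zero] at hnorm
    have h1 := tendsto_pow_atTop_nhds_zero_iff.mp hnorm
    simpa [abs_norm] using h1
  -- p ≠ 0
  have hp0 : p ≠ 0 := by
    intro hp'
    have hy : ∀ (z0 : (Fin n ⊕ Fin n ⊕ Fin n) → ℝ) (k : ℕ) (i : Fin n),
        (A ^ k *ᵥ z0) (Sum.inr (Sum.inr i)) = z0 (Sum.inr (Sum.inr i)) := by
      intro z0 k
      induction k with
      | zero => intro i; simp [Matrix.one_mulVec]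
      | succ k ihk =>
        intro i
        rw [pow_succ', ← Matrix.mulVec_mulVec]
        set w := A ^ k *ᵥ z0 with hw
        rw [← sum_elim_comp w, hAmul]
        simp [hp', ihk i]
    obtain ⟨rs, xs, _, _, h3⟩ := hsync 0 0 (fun _ => 1)
    have h := tendsto_pi_nhds.mp h3 i0
    have hconst : ∀ k : ℕ,
        (A ^ k *ᵥ Sum.elim 0 (Sum.elim 0 fun _ => (1:ℝ))) (Sum.inr (Sum.inr i0)) = 1 := by
      intro k; rw [hy]; simp
    simp only [hconst] at h
    exact one_ne_zero (tendsto_nhds_unique tendsto_const_nhds h)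
  have hτc : (τ : ℂ) ≠ 0 := Complex.ofReal_ne_zero.mpr hτ.ne'
  have hpc : (p : ℂ) ≠ 0 := Complex.ofReal_ne_zero.mpr hp0
  have hrc : ∀ i, (r i : ℂ) ≠ 0 := fun i => Complex.ofReal_ne_zero.mpr (hr i).ne'
  have hRcmul : ∀ (s : Fin n → ℂ) (i : Fin n),
      (R.map Complex.ofReal *ᵥ s) i = (r i : ℂ) * s i := by
    intro s i
    rw [hR]
    rw [show (Matrix.diagonal r).map Complex.ofReal
      = Matrix.diagonal (fun i => (r i : ℂ)) from Matrix.diagonal_map (by simp)]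
    rw [Matrix.mulVec_diagonal]
  have hLc1 : L.map Complex.ofReal *ᵥ (fun _ => (1:ℂ)) = 0 := by
    funext j
    have h := (RingHom.map_mulVec Complex.ofRealHom L (fun _ => 1) j).symm
    simp [hL1, congrFun hL1 j] at h
    exact h
  -- 0 < p
  have hp : 0 < p := by
    have habs : ‖1 - (p : ℂ)‖ < 1 := by
      by_cases hκ₂ : κ₂ = 0
      · refine hEig (1 - (p:ℂ)) (Sum.elim 0 (Sum.elim 0 (fun _ => 1))) ?_ ?_ ?_
        · intro hcon
          have := congrFun hcon (Sum.inr (Sum.inr i0))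
          simp at this
        · rw [hAcmul]
          funext j
          rcases j with i | (i | i) <;>
            simp [Matrix.mulVec_zero, hκ₂]
        · intro hcon
          have : (p : ℂ) = 0 := by linear_combination -hcon
          exact hpc this
      · have hκc : (κ₂ : ℂ) ≠ 0 := Complex.ofReal_ne_zero.mpr hκ₂
        set sv : Fin n → ℂ := fun i => -((p:ℂ) / (τ:ℂ)) * ((r i : ℂ))⁻¹ with hsv
        set yv : Fin n → ℂ := fun i => ((p:ℂ) / (κ₂:ℂ)) * sv i with hyv
        refine hEig (1 - (p:ℂ)) (Sum.elim (fun _ => 1) (Sum.elim sv yv)) ?_ ?_ ?_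
        · intro hcon
          have := congrFun hcon (Sum.inl i0)
          simp at this
        · rw [hAcmul]
          funext j
          rcases j with i | (i | i)
          · have hri := hrc i
            have := hRcmul sv i
            simp only [Sum.elim_inl, Pi.add_apply, Pi.smul_apply, smul_eq_mul, hRcmul, hsv]
            field_simp
            ring
          · simp only [Sum.elim_inr, Sum.elim_inl, hLc1, Pi.add_apply, Pi.smul_apply,
              Pi.zero_apply, smul_eq_mul, mul_zero, zero_add, hyv]
            field_simp
            ring
          · simp only [Sum.elim_inr, hLc1, Pi.add_apply, Pi.smul_apply, Pi.zero_apply,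
              smul_eq_mul, mul_zero, zero_add]
        · intro hcon
          have : (p : ℂ) = 0 := by linear_combination -hcon
          exact hpc this
    have habs' : |1 - p| < 1 := by
      have : ((1 - p : ℝ) : ℂ) = 1 - (p : ℂ) := by push_cast; ring
      rw [← Real.norm_eq_abs, ← Complex.norm_real, this]
      exact habs
    rcases abs_lt.mp habs' with ⟨h1, h2⟩
    linarith
  -- κ₁ ≠ κ₂
  have hκ : κ₁ ≠ κ₂ := by
    intro hcon
    obtain ⟨x, hLx⟩ : ∃ x : Fin n → ℝ, L *ᵥ x ≠ 0 := by
      refine ⟨fun j => if j = i0 then 1 else 0, fun hz => ?_⟩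
      obtain ⟨c, hc⟩ := hker _ hz
      have h0 := congrFun hc i0
      have h1 := congrFun hc i1
      simp [hi01.symm] at h0 h1
      rw [← h0] at h1
      exact one_ne_zero h1.symm
    have hAu : A *ᵥ Sum.elim x (Sum.elim 0 (-(L *ᵥ x))) = Sum.elim x (Sum.elim 0 (-(L *ᵥ x))) := by
      rw [hAmul]
      funext j
      rcases j with i | (i | i)
      · simp
      · simp [hcon]
      · simp only [Sum.elim_inr, Pi.add_apply, Pi.smul_apply, Pi.neg_apply, smul_eq_mul]
        ring
    have hAku : ∀ k : ℕ, A ^ k *ᵥ Sum.elim x (Sum.elim 0 (-(L *ᵥ x)))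
        = Sum.elim x (Sum.elim 0 (-(L *ᵥ x))) := by
      intro k
      induction k with
      | zero => simp [Matrix.one_mulVec]
      | succ k ihk => rw [pow_succ, ← Matrix.mulVec_mulVec, hAu, ihk]
    obtain ⟨i, hi⟩ : ∃ i, (L *ᵥ x) i ≠ 0 := by
      by_contra hcon2
      push_neg at hcon2
      exact hLx (funext fun i => hcon2 i)
    obtain ⟨rs, xs, _, _, h3⟩ := hsync x 0 (-(L *ᵥ x))
    have h := tendsto_pi_nhds.mp h3 i
    simp only [hAku] at h
    have := tendsto_nhds_unique tendsto_const_nhds h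
    simp at this
    exact hi this
  -- complex kernel of L
  have hLcker : ∀ v : Fin n → ℂ, L.map Complex.ofReal *ᵥ v = 0 → ∃ c : ℂ, v = fun _ => c := by
    intro v hv
    have h1 : ∀ j, ((L *ᵥ fun l => (v l).re) j : ℂ)
        + ((L *ᵥ fun l => (v l).im) j : ℝ) * Complex.I = 0 := by
      intro j
      rw [← mulVec_ofReal, hv]
      rfl
    have hre : L *ᵥ (fun l => (v l).re) = 0 := by
      funext j
      have := h1 j
      rw [Complex.ext_iff] at this
      simpa using this.1
    have him : L *ᵥ (fun l => (v l).im) = 0 := by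
      funext j
      have := h1 j
      rw [Complex.ext_iff] at this
      simpa using this.2
    obtain ⟨c1, hc1⟩ := hker _ hre
    obtain ⟨c2, hc2⟩ := hker _ him
    refine ⟨(c1 : ℂ) + (c2 : ℂ) * Complex.I, funext fun l => ?_⟩
    rw [← Complex.re_add_im (v l), congrFun hc1 l, congrFun hc2 l]
  -- the two distinguished vectors
  set e1 : (Fin n ⊕ Fin n ⊕ Fin n) → ℂ := Sum.elim (fun _ => 1) (Sum.elim 0 0) with he1
  set zv : (Fin n ⊕ Fin n ⊕ Fin n) → ℂ :=
    Sum.elim 0 (Sum.elim (fun i => (((r i)⁻¹ : ℝ) : ℂ)) 0) with hzv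
  have hAe1 : Ac *ᵥ e1 = e1 := by
    rw [he1, hAcmul]
    funext j
    rcases j with i | (i | i) <;> simp [hLc1, Matrix.mulVec_zero]
  have hAzv : Ac *ᵥ zv = zv + (τ : ℂ) • e1 := by
    rw [hzv, hAcmul]
    funext j
    rcases j with i | (i | i)
    · have hval : (R.map Complex.ofReal *ᵥ fun i => (((r i)⁻¹ : ℝ) : ℂ)) i = 1 := by
        rw [hRcmul, Complex.ofReal_inv]
        exact mul_inv_cancel₀ (hrc i)
      simp only [Sum.elim_inl, Pi.add_apply, Pi.smul_apply, Pi.zero_apply, smul_eq_mul, hval,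
        he1, zero_add, mul_one]
    · simp [Matrix.mulVec_zero, he1]
    · simp [Matrix.mulVec_zero, he1]
  have hNe1 : (Ac - 1) *ᵥ e1 = 0 := by
    rw [Matrix.sub_mulVec, Matrix.one_mulVec, hAe1, sub_self]
  have hNzv : (Ac - 1) *ᵥ zv = (τ : ℂ) • e1 := by
    rw [Matrix.sub_mulVec, Matrix.one_mulVec, hAzv]
    abel
  -- eigenspace of 1 is spanned by e1
  have hker1 : ∀ u : (Fin n ⊕ Fin n ⊕ Fin n) → ℂ, Ac *ᵥ u = u → ∃ c : ℂ, u = c • e1 := by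
    intro u hu
    set x : Fin n → ℂ := fun i => u (Sum.inl i) with hx
    set sc : Fin n → ℂ := fun i => u (Sum.inr (Sum.inl i)) with hsc
    set yc : Fin n → ℂ := fun i => u (Sum.inr (Sum.inr i)) with hyc
    have hu' : Ac *ᵥ Sum.elim x (Sum.elim sc yc) = Sum.elim x (Sum.elim sc yc) := by
      rw [sum_elim_comp u]
      exact hu
    rw [hAcmul] at hu'
    have eq1 : ∀ i, x i + (τ:ℂ) * (R.map Complex.ofReal *ᵥ sc) i = x i := by
      intro i
      have := congrFun hu' (Sum.inl i)
      simpa using this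
    have hs0 : sc = 0 := by
      funext i
      have h := eq1 i
      rw [hRcmul] at h
      have h2 : (τ:ℂ) * ((r i : ℂ) * sc i) = 0 := by linear_combination h
      rcases mul_eq_zero.mp h2 with h3 | h3
      · exact absurd h3 hτc
      · rcases mul_eq_zero.mp h3 with h4 | h4
        · exact absurd h4 (hrc i)
        · simpa using h4
    have eq3 : ∀ i, -(p:ℂ) * (L.map Complex.ofReal *ᵥ x) i + (1 - (p:ℂ)) * yc i = yc i := by
      intro i
      have := congrFun hu' (Sum.inr (Sum.inr i))
      simpa using this
    have hLxy : ∀ i, (L.map Complex.ofReal *ᵥ x) i = -(yc i) := by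
      intro i
      have h := eq3 i
      have h2 : (p:ℂ) * ((L.map Complex.ofReal *ᵥ x) i + yc i) = 0 := by linear_combination -h
      rcases mul_eq_zero.mp h2 with h3 | h3
      · exact absurd h3 hpc
      · linear_combination h3
    have eq2 : ∀ i, -(κ₁:ℂ) * (L.map Complex.ofReal *ᵥ x) i + sc i + (-(κ₂:ℂ)) * yc i = sc i := by
      intro i
      have := congrFun hu' (Sum.inr (Sum.inl i))
      simpa using this
    have hy0 : yc = 0 := by
      funext i
      have h := eq2 i
      rw [hLxy i] at h
      have h2 : ((κ₁:ℂ) - (κ₂:ℂ)) * yc i = 0 := by linear_combination h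
      rcases mul_eq_zero.mp h2 with h3 | h3
      · exfalso
        apply hκ
        have : ((κ₁ : ℂ) : ℂ) = (κ₂ : ℂ) := by linear_combination h3
        exact_mod_cast this
      · simpa using h3
    have hLx0 : L.map Complex.ofReal *ᵥ x = 0 := by
      funext i
      rw [hLxy i, hy0]
      simp
    obtain ⟨c, hc⟩ := hLcker x hLx0
    refine ⟨c, ?_⟩
    rw [← sum_elim_comp u]
    rw [← hx, ← hsc, ← hyc, hs0, hy0, hc, he1]
    funext j
    rcases j with i | (i | i) <;> simp
  -- powers of the shifted endomorphism
  have hφpow : ∀ (k : ℕ) (u : (Fin n ⊕ Fin n ⊕ Fin n) → ℂ),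
      ((Matrix.toLin' Ac - (1:ℂ) • (1 : Module.End ℂ ((Fin n ⊕ Fin n ⊕ Fin n) → ℂ))) ^ k) u
        = ((Ac - 1) ^ k) *ᵥ u := by
    intro k
    induction k with
    | zero => intro u; simp [Matrix.one_mulVec]
    | succ k ihk =>
      intro u
      rw [pow_succ, Module.End.mul_apply]
      have hstep : (Matrix.toLin' Ac - (1:ℂ) • (1 : Module.End ℂ ((Fin n ⊕ Fin n ⊕ Fin n) → ℂ))) u
          = (Ac - 1) *ᵥ u := by
        simp [Matrix.toLin'_apply, Matrix.sub_mulVec, Matrix.one_mulVec]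
      rw [hstep, ihk, Matrix.mulVec_mulVec, ← pow_succ]
  have hmem : ∀ u : (Fin n ⊕ Fin n ⊕ Fin n) → ℂ,
      u ∈ Module.End.maxGenEigenspace (Matrix.toLin' Ac) 1 ↔ ∃ k : ℕ, ((Ac - 1) ^ k) *ᵥ u = 0 := by
    intro u
    rw [Module.End.mem_maxGenEigenspace]
    constructor
    · rintro ⟨k, hk⟩; exact ⟨k, by rw [← hφpow k u]; exact hk⟩
    · rintro ⟨k, hk⟩; exact ⟨k, by rw [hφpow k u]; exact hk⟩
  -- the generalized eigenspace of 1
  have hspan : Module.End.maxGenEigenspace (Matrix.toLin' Ac) 1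
      = Submodule.span ℂ (Set.range ![e1, zv]) := by
    apply le_antisymm
    · intro u hu
      obtain ⟨k, hk⟩ := (hmem u).mp hu
      have hN2 : ((Ac - 1) * (Ac - 1)) *ᵥ u = 0 := by
        apply hZ k
        · rw [Matrix.mulVec_mulVec,
            show (Ac - 1) ^ k * ((Ac - 1) * (Ac - 1)) = (Ac - 1) * (Ac - 1) * (Ac - 1) ^ k by
              rw [← pow_two, ← pow_add, ← pow_add, add_comm],
            ← Matrix.mulVec_mulVec, hk, Matrix.mulVec_zero]
        · intro j
          have hwm : ∀ m : ℕ, (Ac ^ m *ᵥ (((Ac - 1) * (Ac - 1)) *ᵥ u)) j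
              = (Ac ^ (m+2) *ᵥ u) j - 2 * (Ac ^ (m+1) *ᵥ u) j + (Ac ^ m *ᵥ u) j := by
            intro m
            rw [Matrix.mulVec_mulVec,
              show Ac ^ m * ((Ac - 1) * (Ac - 1))
                = Ac ^ (m+2) - Ac ^ (m+1) - (Ac ^ (m+1) - Ac ^ m) by
                  rw [pow_add, pow_add, pow_one, pow_two]
                  noncomm_ring,
              Matrix.sub_mulVec, Matrix.sub_mulVec, Matrix.sub_mulVec]
            simp only [Pi.sub_apply]
            ring
          simp only [hwm]
          exact hDc u j
      have hNu : Ac *ᵥ ((Ac - 1) *ᵥ u) = (Ac - 1) *ᵥ u := by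
        have h2 : (Ac - 1) *ᵥ ((Ac - 1) *ᵥ u) = 0 := by
          rw [Matrix.mulVec_mulVec]; exact hN2
        rwa [Matrix.sub_mulVec, Matrix.one_mulVec, sub_eq_zero] at h2
      obtain ⟨c, hc⟩ := hker1 _ hNu
      have hAcu : Ac *ᵥ u = u + c • e1 := by
        have := hc
        rw [Matrix.sub_mulVec, Matrix.one_mulVec] at this
        rw [← this]
        abel
      have hfix : Ac *ᵥ (u - (c / (τ:ℂ)) • zv) = u - (c / (τ:ℂ)) • zv := by
        rw [Matrix.mulVec_sub, Matrix.mulVec_smul, hAzv, hAcu, smul_add, smul_smul,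
          div_mul_cancel₀ c hτc]
        abel
      obtain ⟨c', hc'⟩ := hker1 _ hfix
      have hurep : u = c' • e1 + (c / (τ:ℂ)) • zv := by
        have := hc'
        rw [sub_eq_iff_eq_add] at this
        rw [this]
      rw [hurep]
      refine Submodule.add_mem _ ?_ ?_
      · exact Submodule.smul_mem _ _ (Submodule.subset_span ⟨0, rfl⟩)
      · exact Submodule.smul_mem _ _ (Submodule.subset_span ⟨1, rfl⟩)
    · have hmeme1 : e1 ∈ Module.End.maxGenEigenspace (Matrix.toLin' Ac) 1 :=
        (hmem _).mpr ⟨1, by simpa [pow_one] using hNe1⟩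
      have hmemzv : zv ∈ Module.End.maxGenEigenspace (Matrix.toLin' Ac) 1 :=
        (hmem _).mpr ⟨2, by
          rw [pow_two, ← Matrix.mulVec_mulVec, hNzv, Matrix.mulVec_smul, hNe1, smul_zero]⟩
      rw [Submodule.span_le]
      rintro w ⟨i, rfl⟩
      fin_cases i
      · simpa using hmeme1
      · simpa using hmemzv
  -- linear independence and dimension
  have hLI : LinearIndependent ℂ ![e1, zv] := by
    rw [LinearIndependent.pair_iff]
    intro a b hab
    have h0 := congrFun hab (Sum.inl i0)
    have h1 := congrFun hab (Sum.inr (Sum.inl i0))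
    have h0' : a = 0 := by simpa [he1, hzv] using h0
    refine ⟨h0', ?_⟩
    have h1' : b * (((r i0)⁻¹ : ℝ) : ℂ) = 0 := by simpa [he1, hzv, h0'] using h1
    rcases mul_eq_zero.mp h1' with h2 | h2
    · exact h2
    · exact absurd (Complex.ofReal_eq_zero.mp h2) (inv_ne_zero (hr i0).ne')
  have hmult : Polynomial.rootMultiplicity (1 : ℂ) Ac.charpoly = 2 := by
    rw [Polynomial.rootMultiplicity_eq_natTrailingDegree, charpoly_shift Ac 1, one_smul,
      ← _root_.charpoly_toLin' (Ac - 1), ← LinearMap.finrank_maxGenEigenspace_zero_eq]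
    have hspaces : Module.End.maxGenEigenspace (Matrix.toLin' (Ac - 1)) 0
        = Module.End.maxGenEigenspace (Matrix.toLin' Ac) 1 := by
      have hEnd : Matrix.toLin' (Ac - 1) - (0:ℂ) • (1 : Module.End ℂ ((Fin n ⊕ Fin n ⊕ Fin n) → ℂ))
          = Matrix.toLin' Ac - (1:ℂ) • (1 : Module.End ℂ ((Fin n ⊕ Fin n ⊕ Fin n) → ℂ)) := by
        apply LinearMap.ext
        intro u
        have hh : (Matrix.toLin' (Ac - 1)) u = (Matrix.toLin' Ac) u - u := by
          rw [Matrix.toLin'_apply, Matrix.toLin'_apply, Matrix.sub_mulVec, Matrix.one_mulVec]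
        rw [LinearMap.sub_apply, LinearMap.sub_apply, hh]
        simp only [zero_smul, LinearMap.zero_apply, sub_zero, one_smul, Module.End.one_apply]
      ext u
      rw [Module.End.mem_maxGenEigenspace, Module.End.mem_maxGenEigenspace]
      simp only [hEnd]
    rw [hspaces, hspan, finrank_span_eq_card hLI]
    simp
  refine ⟨hκ, hp, hmult, ?_⟩
  intro μ hroot hμ
  obtain ⟨u, hu, hAu⟩ := eigenvector_of_root Ac μ hroot
  exact hEig μ u hu hAu hμ
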